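/- arXiv:1107.5187 — 3 statements merged into one kernel-verified Lean document; each statement's English description precedes it below -/
import Mathlib

section
/- Let R be a commutative unital complex semisimple Banach algebra and A an n×n matrix with entries in R. Then a complex number λ belongs to the spectrum of A (as an element of the Banach algebra of n×n matrices over R) if and only if λ belongs to the spectrum of the complex matrix Â(φ) obtained by applying the character φ entrywise to A, for some character φ of R. -/
open WeakDual

/-- For a commutative unital complex semisimple Banach algebra `R` and
`A ∈ R^{n×n}`, `λ` is in the spectrum of `A` in the matrix algebra iff `λ` is in the
spectrum of the complex matrix `Â(φ)` for some character `φ` of `R`. -/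
theorem spectrum_matrix_iff_exists_character
    {R : Type*} [NormedCommRing R] [NormedAlgebra ℂ R] [CompleteSpace R] [Nontrivial R]
    (hss : ∀ x : R, (∀ φ : characterSpace ℂ R, φ x = 0) → x = 0)
    {n : ℕ} (A : Matrix (Fin n) (Fin n) R) (lam : ℂ) :
    lam ∈ spectrum ℂ A ↔
      ∃ φ : characterSpace ℂ R, lam ∈ spectrum ℂ (A.map fun x => φ x) := by
  have key : ∀ φ : characterSpace ℂ R,
      (algebraMap ℂ (Matrix (Fin n) (Fin n) R) lam - A).map (fun x => φ x) =
        algebraMap ℂ (Matrix (Fin n) (Fin n) ℂ) lam - A.map (fun x => φ x) := by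
    intro φ
    ext i j
    simp only [Matrix.map_apply, Matrix.sub_apply, Matrix.algebraMap_matrix_apply, map_sub]
    split_ifs
    · rw [AlgHomClass.commutes]
    · rw [map_zero]
  rw [spectrum.mem_iff, Matrix.isUnit_iff_isUnit_det]
  constructor
  · intro h
    obtain ⟨φ, hφ⟩ := WeakDual.CharacterSpace.exists_apply_eq_zero h
    refine ⟨φ, ?_⟩
    have hdet : (((algebraMap ℂ (Matrix (Fin n) (Fin n) R)) lam - A).map
        fun x => φ x).det = φ ((algebraMap ℂ (Matrix (Fin n) (Fin n) R)) lam - A).det := by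
      rw [show ((((algebraMap ℂ (Matrix (Fin n) (Fin n) R)) lam - A).map fun x => φ x)) =
        (φ : R →+* ℂ).mapMatrix ((algebraMap ℂ (Matrix (Fin n) (Fin n) R)) lam - A) from rfl]
      exact ((φ : R →+* ℂ).map_det _).symm
    rw [spectrum.mem_iff, Matrix.isUnit_iff_isUnit_det, ← key φ, hdet,
      isUnit_iff_ne_zero, ne_eq, not_not]
    exact hφ
  · rintro ⟨φ, hφ⟩
    have hdet : (((algebraMap ℂ (Matrix (Fin n) (Fin n) R)) lam - A).map
        fun x => φ x).det = φ ((algebraMap ℂ (Matrix (Fin n) (Fin n) R)) lam - A).det := by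
      rw [show ((((algebraMap ℂ (Matrix (Fin n) (Fin n) R)) lam - A).map fun x => φ x)) =
        (φ : R →+* ℂ).mapMatrix ((algebraMap ℂ (Matrix (Fin n) (Fin n) R)) lam - A) from rfl]
      exact ((φ : R →+* ℂ).map_det _).symm
    rw [spectrum.mem_iff, Matrix.isUnit_iff_isUnit_det, ← key φ, hdet,
      isUnit_iff_ne_zero, ne_eq, not_not] at hφ
    intro h
    exact isUnit_iff_ne_zero.mp (h.map (φ : R →+* ℂ)) hφ
end

section
/- Let R be a commutative unital complex semisimple Banach algebra and A an n×n matrix with entries in R. Then λ is in the spectrum of A as an element of the Banach algebra R^{n×n} if and only if λ is in the spectrum of the multiplication operator M_A : R^n → R^n, v ↦ Av, as a bounded linear operator on the Banach space R^n. -/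
/-- For a commutative unital complex Banach algebra `R` (semisimple in the
paper, though not needed to state the claim) and `A ∈ R^{n×n}`, the spectrum of `A` in
the matrix algebra `R^{n×n}` coincides with the spectrum of the bounded multiplication
operator `M_A : R^n → R^n`, `v ↦ Av`, where `R^n` carries the sup norm. -/
theorem spectrum_matrix_eq_spectrum_mulVec
    {R : Type*} [NormedCommRing R] [NormedAlgebra ℂ R] [CompleteSpace R] [Nontrivial R]
    (hss : ∀ x : R, (∀ φ : WeakDual.characterSpace ℂ R, φ x = 0) → x = 0)
    {n : ℕ} (A : Matrix (Fin n) (Fin n) R)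
    (T : (Fin n → R) →L[ℂ] (Fin n → R)) (hT : ∀ v, T v = A.mulVec v) (lam : ℂ) :
    lam ∈ spectrum ℂ A ↔ lam ∈ spectrum ℂ T := by
  classical
  set M : Matrix (Fin n) (Fin n) R := algebraMap ℂ _ lam - A with hM
  set T' : (Fin n → R) →L[ℂ] (Fin n → R) := algebraMap ℂ _ lam - T with hT'
  have hT'app : ∀ v, T' v = M.mulVec v := by
    intro v
    have h1 : T' v = lam • v - T v := by
      simp [hT', Algebra.algebraMap_eq_smul_one]
    rw [h1, hT v, hM, Algebra.algebraMap_eq_smul_one, Matrix.sub_mulVec,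
      Matrix.smul_mulVec, Matrix.one_mulVec]
  rw [spectrum.mem_iff, spectrum.mem_iff, not_iff_not]
  constructor
  · rintro hMu
    obtain ⟨B, hMB, hBM⟩ := isUnit_iff_exists.mp hMu
    refine isUnit_iff_exists.mpr ⟨⟨(B.mulVecLin.restrictScalars ℂ), ?_⟩, ?_, ?_⟩
    · have : ∀ v : Fin n → R, B.mulVec v = fun i => ∑ j, B i j * v j := fun v =>
        funext fun i => rfl
      show Continuous fun v : Fin n → R => B.mulVec v
      simp only [this]
      exact continuous_pi fun i => continuous_finset_sum _ fun j _ =>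
        continuous_const.mul (continuous_apply j)
    · refine ContinuousLinearMap.ext fun v => ?_
      rw [ContinuousLinearMap.mul_apply, ContinuousLinearMap.one_apply, ← hT']
      show T' (B.mulVec v) = v
      rw [hT'app, Matrix.mulVec_mulVec, hMB, Matrix.one_mulVec]
    · refine ContinuousLinearMap.ext fun v => ?_
      rw [ContinuousLinearMap.mul_apply, ContinuousLinearMap.one_apply, ← hT']
      show B.mulVec (T' v) = v
      rw [hT'app, Matrix.mulVec_mulVec, hBM, Matrix.one_mulVec]
  · intro hTu
    by_contra hMu
    have hdetu : ¬IsUnit M.det := fun h => hMu ((Matrix.isUnit_iff_isUnit_det M).mpr h)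
    obtain ⟨φ, hφ⟩ := WeakDual.CharacterSpace.exists_apply_eq_zero hdetu
    have hdet0 : (M.map φ).det = 0 := by
      have h1 : M.map φ = (φ : R →+* ℂ).mapMatrix M := rfl
      rw [h1, ← RingHom.map_det]
      exact hφ
    obtain ⟨u, hu0, huM⟩ := Matrix.exists_vecMul_eq_zero_iff.mpr hdet0
    obtain ⟨k, hk⟩ := Function.ne_iff.mp hu0
    have hk' : u k ≠ 0 := by simpa using hk
    obtain ⟨v, hv⟩ : ∃ v, T' v = Pi.single k (1 : R) := by
      obtain ⟨Tu, hTueq⟩ := hTu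
      refine ⟨(↑Tu⁻¹ : (Fin n → R) →L[ℂ] (Fin n → R)) (Pi.single k 1), ?_⟩
      calc T' ((↑Tu⁻¹ : (Fin n → R) →L[ℂ] (Fin n → R)) (Pi.single k 1))
          = ((↑Tu * ↑Tu⁻¹ : (Fin n → R) →L[ℂ] (Fin n → R))) (Pi.single k 1) := by
            rw [ContinuousLinearMap.mul_apply, hTueq, hT']
        _ = Pi.single k 1 := by
            rw [← Units.val_mul, mul_inv_cancel, Units.val_one,
              ContinuousLinearMap.one_apply]
    have key : ∑ i, u i * φ (M.mulVec v i) = 0 := by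
      have expand : ∀ i, M.mulVec v i = ∑ j, M i j * v j := fun i => rfl
      calc ∑ i, u i * φ (M.mulVec v i)
          = ∑ i, ∑ j, u i * (φ (M i j) * φ (v j)) := by
            simp only [expand, map_sum, map_mul, Finset.mul_sum]
        _ = ∑ j, (∑ i, u i * φ (M i j)) * φ (v j) := by
            rw [Finset.sum_comm]
            simp only [Finset.sum_mul, mul_assoc]
        _ = 0 := by
            refine Finset.sum_eq_zero fun j _ => ?_
            have h2 := congrFun huM j
            simp only [Matrix.vecMul, dotProduct, Matrix.map_apply,
              Pi.zero_apply] at h2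
            rw [h2, zero_mul]
    rw [← hT'app, hv] at key
    have : (u k : ℂ) = 0 := by
      simpa [Pi.single_apply, Finset.sum_ite_eq', map_one] using key
    exact hk' this
end

section
/- Let R be a commutative unital complex Banach algebra and A ∈ R^{n×n}. If A is exponentially stable, i.e., there exist C > 0 and ε > 0 with ‖e^{tA}‖ ≤ C e^{−εt} for all t ≥ 0, then for every character φ of R, all eigenvalues of the complex matrix Â(φ) have real part at most −ε, in particular negative. -/
open WeakDual NormedSpace NNReal

attribute [local instance] Matrix.linftyOpNormedRing Matrix.linftyOpNormedAlgebra

set_option maxHeartbeats 1000000 in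
lemma nnnorm_mapMatrix_le' {R : Type*} [NormedCommRing R] {n : ℕ}
    (f : R → ℂ) (c : ℝ≥0) (hf : ∀ x, ‖f x‖₊ ≤ c * ‖x‖₊)
    (M : Matrix (Fin n) (Fin n) R) : ‖M.map f‖₊ ≤ c * ‖M‖₊ := by
  rw [Matrix.linfty_opNNNorm_def, Matrix.linfty_opNNNorm_def]
  refine Finset.sup_le fun i _ => ?_
  calc ∑ j, ‖M.map f i j‖₊ ≤ ∑ j, c * ‖M i j‖₊ :=
        Finset.sum_le_sum fun j _ => hf _
    _ = c * ∑ j, ‖M i j‖₊ := by rw [Finset.mul_sum]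
    _ ≤ c * Finset.univ.sup fun i => ∑ j, ‖M i j‖₊ :=
        mul_le_mul_right (Finset.le_sup (f := fun i => ∑ j, ‖M i j‖₊) (Finset.mem_univ i)) c

set_option maxHeartbeats 1000000 in
/-- If `A ∈ R^{n×n}` is exponentially stable with rate `ε`, then for every
character `φ` of `R` all eigenvalues of `Â(φ)` have real part at most `−ε` (in
particular negative). -/
theorem spectrum_re_le_of_exponentially_stable
    {R : Type*} [NormedCommRing R] [NormedAlgebra ℂ R] [CompleteSpace R] [Nontrivial R]
    {n : ℕ} (A : Matrix (Fin n) (Fin n) R) {C ε : ℝ} (hC : 0 < C) (hε : 0 < ε)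
    (hA : ∀ t : ℝ, 0 ≤ t → ‖exp ((t : ℂ) • A)‖ ≤ C * Real.exp (-ε * t)) :
    ∀ φ : characterSpace ℂ R, ∀ lam ∈ spectrum ℂ (A.map fun x => φ x),
      lam.re ≤ -ε := by
  intro φ lam hlam
  rcases Nat.eq_zero_or_pos n with hn | hn
  · subst hn
    exact absurd hlam (by simp [spectrum.mem_iff, isUnit_of_subsingleton])
  have : NeZero n := ⟨hn.ne'⟩
  set ψ : R →ₐ[ℂ] ℂ := AlgHomClass.toAlgHom φ with hψ
  set Ψ : Matrix (Fin n) (Fin n) R →ₐ[ℂ] Matrix (Fin n) (Fin n) ℂ := ψ.mapMatrix with hΨ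
  have hψb : ∀ x : R, ‖ψ x‖₊ ≤ ‖(1 : R)‖₊ * ‖x‖₊ := by
    intro x
    rw [mul_comm]
    exact AlgHom.norm_apply_le_self_mul_norm_one ψ x
  have hΨb : ∀ M : Matrix (Fin n) (Fin n) R, ‖Ψ M‖ ≤ ‖(1 : R)‖ * ‖M‖ := by
    intro M
    exact_mod_cast nnnorm_mapMatrix_le' ψ ‖(1 : R)‖₊ hψb M
  have hΨc : Continuous Ψ := AddMonoidHomClass.continuous_of_bound Ψ ‖(1 : R)‖ fun M => hΨb M
  set B : Matrix (Fin n) (Fin n) ℂ := A.map fun x => φ x with hB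
  have hone : (0 : ℝ) < ‖(1 : R)‖ := norm_pos_iff.mpr one_ne_zero
  set K : ℝ := ‖(1 : R)‖ * C with hK
  have hKpos : 0 < K := mul_pos hone hC
  -- key inequality
  have key : ∀ t : ℝ, 0 ≤ t → Real.exp (t * (lam.re + ε)) ≤ K := by
    intro t ht
    have hmem : (t : ℂ) * lam ∈ spectrum ℂ ((t : ℂ) • B) := by
      rw [spectrum.smul_eq_smul (t : ℂ) B ⟨lam, hlam⟩]
      exact ⟨lam, hlam, rfl⟩
    have hexp : exp ((t : ℂ) * lam) ∈ spectrum ℂ (exp ((t : ℂ) • B)) :=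
      spectrum.exp_mem_exp _ hmem
    have h1 : ‖exp ((t : ℂ) * lam)‖ ≤ ‖exp ((t : ℂ) • B)‖ :=
      spectrum.norm_le_norm_of_mem hexp
    have h2 : exp ((t : ℂ) • B) = Ψ (exp ((t : ℂ) • A)) := by
      haveI : @CompleteSpace (Matrix (Fin n) (Fin n) R) PseudoMetricSpace.toUniformSpace := (inferInstance : CompleteSpace (Fin n → Fin n → R))
      refine Eq.trans ?_ (map_exp_of_mem_ball (𝕂 := ℂ) Ψ hΨc ((t : ℂ) • A) ((expSeries_radius_eq_top ℂ (Matrix (Fin n) (Fin n) R)).symm ▸ edist_lt_top _ _)).symm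
      rw [map_smul]
      rfl
    have h3 : ‖exp ((t : ℂ) • B)‖ ≤ ‖(1 : R)‖ * (C * Real.exp (-ε * t)) := by
      rw [h2]
      exact (hΨb _).trans (by
        have := hA t ht
        exact mul_le_mul_of_nonneg_left this hone.le)
    have h4 : ‖exp ((t : ℂ) * lam)‖ = Real.exp (t * lam.re) := by
      rw [← Complex.exp_eq_exp_ℂ, Complex.norm_exp]
      norm_num
    have h5 : Real.exp (t * lam.re) ≤ ‖(1 : R)‖ * (C * Real.exp (-ε * t)) := by
      rw [← h4]; exact h1.trans h3
    have h6 : Real.exp (t * (lam.re + ε)) = Real.exp (t * lam.re) * Real.exp (ε * t) := by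
      rw [← Real.exp_add]; ring_nf
    rw [h6]
    calc Real.exp (t * lam.re) * Real.exp (ε * t)
        ≤ ‖(1 : R)‖ * (C * Real.exp (-ε * t)) * Real.exp (ε * t) :=
          mul_le_mul_of_nonneg_right h5 (Real.exp_pos _).le
      _ = ‖(1 : R)‖ * C * (Real.exp (-ε * t) * Real.exp (ε * t)) := by ring
      _ = K := by rw [← Real.exp_add, neg_mul, neg_add_cancel, Real.exp_zero, mul_one, hK]
  -- conclude
  by_contra h
  push_neg at h
  set δ : ℝ := lam.re + ε with hδ
  have hδpos : 0 < δ := by linarith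
  set t : ℝ := max 0 ((Real.log K + 1) / δ) with htdef
  have ht0 : 0 ≤ t := le_max_left _ _
  have htδ : Real.log K < t * δ := by
    have : (Real.log K + 1) / δ ≤ t := le_max_right _ _
    have := (div_le_iff₀ hδpos).mp this
    linarith
  have : K < Real.exp (t * δ) := by
    calc K = Real.exp (Real.log K) := (Real.exp_log hKpos).symm
      _ < Real.exp (t * δ) := Real.exp_lt_exp.mpr htδ
  exact absurd (key t ht0) (not_le.mpr this)
end
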